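/- Let k be a field of characteristic zero and I a homogeneous (graded) ideal in k[x₁,…,xₙ]. Then I is Borel-fixed (i.e., g.I = I for every invertible upper triangular n×n matrix g over k, acting by the k-algebra automorphism x_j ↦ Σ_i g_{ij} x_i) if and only if I is a monomial ideal and is strongly stable. -/

import Mathlib

open MvPolynomial

section BorelAux

variable {k : Type*} [CommRing k] {n : ℕ}


variable {k : Type*} [CommRing k] {n : ℕ}

/-- The substitution endomorphism attached to a matrix. -/
noncomputable def bsubst (g : Matrix (Fin n) (Fin n) k) :
    MvPolynomial (Fin n) k →ₐ[k] MvPolynomial (Fin n) k :=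
  aeval fun j : Fin n => ∑ i : Fin n, g i j • X i

theorem bsubst_comp (g g' : Matrix (Fin n) (Fin n) k) :
    (bsubst g).comp (bsubst g') = bsubst (g * g') := by
  apply MvPolynomial.algHom_ext
  intro j
  simp only [AlgHom.comp_apply, bsubst, aeval_X, map_sum, map_smul, Matrix.mul_apply]
  simp only [Finset.smul_sum, Finset.sum_smul, smul_smul]
  rw [Finset.sum_comm]
  exact Finset.sum_congr rfl fun i _ => Finset.sum_congr rfl fun l _ => by rw [mul_comm]

theorem bsubst_one : (bsubst (1 : Matrix (Fin n) (Fin n) k)) = AlgHom.id k _ := by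
  apply MvPolynomial.algHom_ext
  intro j
  simp [bsubst, Matrix.one_apply]


variable {n : ℕ}

/-- `BDom s m`: `m` is obtained from `s` by moving exponent mass to smaller indices. -/
def BDom (s m : Fin n →₀ ℕ) : Prop :=
  (∑ i, m i = ∑ i, s i) ∧ ∀ t : Fin n, ∑ i ∈ Finset.Iic t, s i ≤ ∑ i ∈ Finset.Iic t, m i

theorem BDom.refl (s : Fin n →₀ ℕ) : BDom s s := ⟨rfl, fun _ => le_rfl⟩

theorem BDom.add {s₁ s₂ m₁ m₂ : Fin n →₀ ℕ} (h₁ : BDom s₁ m₁) (h₂ : BDom s₂ m₂) :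
    BDom (s₁ + s₂) (m₁ + m₂) := by
  constructor
  · simp only [Finsupp.add_apply, Finset.sum_add_distrib, h₁.1, h₂.1]
  · intro t
    simp only [Finsupp.add_apply, Finset.sum_add_distrib]
    exact Nat.add_le_add (h₁.2 t) (h₂.2 t)

theorem BDom.single {i j : Fin n} (hij : i ≤ j) (b : ℕ) :
    BDom (Finsupp.single j b) (Finsupp.single i b) := by
  constructor
  · simp [Finsupp.single_apply, Finset.sum_ite_eq]
  · intro t
    simp only [Finsupp.single_apply]
    rw [Finset.sum_ite_eq (Finset.Iic t) j fun _ => b,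
      Finset.sum_ite_eq (Finset.Iic t) i fun _ => b]
    simp only [Finset.mem_Iic]
    by_cases hj : j ≤ t
    · rw [if_pos hj, if_pos (hij.trans hj)]
    · rw [if_neg hj]; positivity

theorem BDom.good {Good : (Fin n →₀ ℕ) → Prop}
    (SS : ∀ (m : Fin n →₀ ℕ) (i j : Fin n), i < j → Good m → 0 < m j →
      Good (m - Finsupp.single j 1 + Finsupp.single i 1)) :
    ∀ (N : ℕ) (s m : Fin n →₀ ℕ), (∑ i : Fin n, (i : ℕ) * s i) < N →
      BDom s m → Good s → Good m := by
  intro N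
  induction N with
  | zero => intro s m h; omega
  | succ N ih =>
    intro s m hW hdom hgood
    by_cases hsm : s = m
    · exact hsm ▸ hgood
    -- the minimal index where s and m differ
    have hFne : (Finset.univ.filter (fun a : Fin n => s a ≠ m a)).Nonempty := by
      obtain ⟨a, ha⟩ := Finsupp.ne_iff.mp hsm
      exact ⟨a, by simpa using ha⟩
    set t := (Finset.univ.filter (fun a : Fin n => s a ≠ m a)).min' hFne with ht
    have htmem := (Finset.univ.filter (fun a : Fin n => s a ≠ m a)).min'_mem hFne
    rw [Finset.mem_filter] at htmem
    obtain ⟨-, htne⟩ := htmem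
    rw [← ht] at htne
    have hlt : ∀ a : Fin n, a < t → s a = m a := by
      intro a ha
      by_contra hne
      exact absurd (Finset.min'_le _ a (by simpa using hne)) (not_le.mpr ha)
    have hIio : ∑ i ∈ Finset.Iio t, s i = ∑ i ∈ Finset.Iio t, m i :=
      Finset.sum_congr rfl fun a ha => hlt a (Finset.mem_Iio.mp ha)
    have hIic : ∀ (f : Fin n →₀ ℕ), ∑ i ∈ Finset.Iic t, f i = f t + ∑ i ∈ Finset.Iio t, f i := by
      intro f
      rw [← Finset.Iio_insert, Finset.sum_insert (by simp)]
    have hst : s t < m t := by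
      have h2 := hdom.2 t
      rw [hIic s, hIic m, hIio] at h2
      omega
    -- there is an index j > t with s j > 0
    have hjex : ∃ j : Fin n, t < j ∧ 0 < s j := by
      by_contra hno
      push_neg at hno
      have huniv : ∀ f : Fin n →₀ ℕ,
          ∑ i, f i = ∑ i ∈ Finset.Iic t, f i + ∑ i ∈ Finset.Ioi t, f i := by
        intro f
        rw [← Finset.sum_union (by
          apply Finset.disjoint_left.mpr
          intro a ha ha'
          exact absurd (Finset.mem_Iic.mp ha) (not_le.mpr (Finset.mem_Ioi.mp ha')))]
        apply Finset.sum_congr _ fun _ _ => rfl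
        ext a
        simp [le_or_gt]
      have hzero : ∑ i ∈ Finset.Ioi t, s i = 0 :=
        Finset.sum_eq_zero fun a ha => Nat.le_antisymm (hno a (Finset.mem_Ioi.mp ha)) (Nat.zero_le _)
      have hdeg := hdom.1
      rw [huniv s, huniv m, hzero, hIic s, hIic m, hIio] at hdeg
      omega
    have hGne : (Finset.univ.filter (fun a : Fin n => t < a ∧ 0 < s a)).Nonempty := by
      obtain ⟨j, hj⟩ := hjex; exact ⟨j, by simpa using hj⟩
    set j := (Finset.univ.filter (fun a : Fin n => t < a ∧ 0 < s a)).min' hGne with hj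
    have hjmem := (Finset.univ.filter (fun a : Fin n => t < a ∧ 0 < s a)).min'_mem hGne
    rw [Finset.mem_filter] at hjmem
    obtain ⟨-, htj, hsj⟩ := hjmem
    rw [← hj] at htj hsj
    have hjmin : ∀ a : Fin n, t < a → a < j → s a = 0 := by
      intro a hta haj
      by_contra hne
      exact absurd (Finset.min'_le _ a (by simp [hta, Nat.pos_of_ne_zero hne]))
        (not_le.mpr haj)
    -- the single move
    set sj : Fin n →₀ ℕ := s - Finsupp.single j 1 with hsjdef
    set s' : Fin n →₀ ℕ := sj + Finsupp.single t 1 with hs'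
    have hgood' : Good s' := SS s t j htj hgood hsj
    have hsub : sj + Finsupp.single j 1 = s := by
      apply tsub_add_cancel_of_le
      exact (Finsupp.single_le_iff).mpr hsj
    -- sums over any finset
    have hsum : ∀ (F : Finset (Fin n)) (x : Fin n),
        ∑ i ∈ F, (sj + (Finsupp.single x 1 : Fin n →₀ ℕ)) i
          = ∑ i ∈ F, sj i + (if x ∈ F then 1 else 0) := by
      intro F x
      simp only [Finsupp.add_apply, Finset.sum_add_distrib, Finsupp.single_apply]
      rw [Finset.sum_ite_eq F x fun _ => 1]
    have hsums : ∀ (F : Finset (Fin n)),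
        ∑ i ∈ F, s i = ∑ i ∈ F, sj i + (if j ∈ F then 1 else 0) := by
      intro F
      conv_lhs => rw [← hsub]
      exact hsum F j
    have hdom' : BDom s' m := by
      constructor
      · rw [hdom.1, hs', hsum Finset.univ t, hsums Finset.univ]
        simp
      · intro r
        have h2 := hdom.2 r
        rw [hsums (Finset.Iic r)] at h2
        rw [hs', hsum (Finset.Iic r) t]
        simp only [Finset.mem_Iic] at *
        by_cases hjr : j ≤ r
        · rw [if_pos hjr] at h2
          rw [if_pos ((le_of_lt htj).trans hjr)]
          omega
        · rw [if_neg hjr] at h2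
          by_cases htr : t ≤ r
          · rw [if_pos htr]
            -- sum_{Iic r} s = s t + sum_{Iio t} s, since s vanishes on (t, r]
            have hs2 : ∑ i ∈ Finset.Iic r, s i = ∑ i ∈ Finset.Iic r, sj i := by
              rw [hsums (Finset.Iic r)]
              simp [Finset.mem_Iic, hjr]
            have hsplit : ∑ i ∈ Finset.Iic r, s i = s t + ∑ i ∈ Finset.Iio t, s i := by
              have hU : Finset.Iic r = Finset.Iic t ∪ Finset.Ioc t r := by
                ext a
                simp only [Finset.mem_Iic, Finset.mem_union, Finset.mem_Ioc, Fin.le_def,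
                  Fin.lt_def]
                have := Fin.le_def.mp htr
                omega
              rw [hU,
                Finset.sum_union (by
                  apply Finset.disjoint_left.mpr
                  intro a ha ha'
                  exact absurd (Finset.mem_Iic.mp ha)
                    (not_le.mpr (Finset.mem_Ioc.mp ha').1)), hIic s]
              have hz : ∑ i ∈ Finset.Ioc t r, s i = 0 :=
                Finset.sum_eq_zero fun a ha => by
                  obtain ⟨h1', h2'⟩ := Finset.mem_Ioc.mp ha
                  exact hjmin a h1' (lt_of_le_of_lt h2' (not_le.mp hjr))
              omega
            have hmsub : ∑ i ∈ Finset.Iic t, m i ≤ ∑ i ∈ Finset.Iic r, m i :=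
              Finset.sum_le_sum_of_subset (Finset.Iic_subset_Iic.mpr htr)
            rw [hIic m] at hmsub
            omega
          · rw [if_neg htr]
            omega
    -- the weight decreases
    have e1 : ∀ x : Fin n, ∑ i : Fin n, (i : ℕ) * (sj + (Finsupp.single x 1 : Fin n →₀ ℕ)) i
        = (∑ i : Fin n, (i : ℕ) * sj i) + x := by
      intro x
      simp only [Finsupp.add_apply, Nat.mul_add, Finset.sum_add_distrib,
        Finsupp.single_apply]
      congr 1
      rw [Finset.sum_congr rfl (fun i _ => by
        rw [show (i : ℕ) * (if x = i then 1 else 0) = if x = i then (i : ℕ) else 0 by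
          split <;> simp])]
      rw [Finset.sum_ite_eq Finset.univ x fun i => (i : ℕ)]
      simp
    have e2 : ∑ i : Fin n, (i : ℕ) * s i
        = (∑ i : Fin n, (i : ℕ) * sj i) + j := by
      conv_lhs => rw [← hsub]
      exact e1 j
    have hW' : (∑ i : Fin n, (i : ℕ) * s' i) < N := by
      rw [hs', e1 t]
      have htjn : (t : ℕ) < (j : ℕ) := htj
      omega
    exact ih s' m hW' hdom' hgood'


variable [Nontrivial k]

theorem support_L {g : Matrix (Fin n) (Fin n) k}
    (hg : ∀ i j : Fin n, j < i → g i j = 0) (j : Fin n) :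
    ∀ m ∈ ((∑ i : Fin n, g i j • X i : MvPolynomial (Fin n) k)).support,
      BDom (Finsupp.single j 1) m := by
  intro m hm
  obtain ⟨i, -, hi⟩ := Finset.mem_biUnion.mp (support_sum hm)
  have hi' := support_smul hi
  by_cases hij : i ≤ j
  · rw [support_X] at hi'
    rw [Finset.mem_singleton.mp hi']
    exact BDom.single hij 1
  · rw [hg i j (not_le.mp hij)] at hi
    simp at hi

theorem support_Lpow {g : Matrix (Fin n) (Fin n) k}
    (hg : ∀ i j : Fin n, j < i → g i j = 0) (j : Fin n) (b : ℕ) :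
    ∀ m ∈ (((∑ i : Fin n, g i j • X i : MvPolynomial (Fin n) k)) ^ b).support,
      BDom (Finsupp.single j b) m := by
  induction b with
  | zero =>
    intro m hm
    rw [pow_zero] at hm
    have : m = 0 := by
      by_contra h
      have := mem_support_iff.mp hm
      rw [coeff_one, if_neg (by exact fun h' => h h'.symm)] at this
      exact this rfl
    rw [this, Finsupp.single_zero]
    exact BDom.refl 0
  | succ b ih =>
    intro m hm
    rw [pow_succ] at hm
    obtain ⟨m₁, hm₁, m₂, hm₂, rfl⟩ := Finset.mem_add.mp (support_mul _ _ hm)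
    rw [Finsupp.single_add]
    exact BDom.add (ih m₁ hm₁) (support_L hg j m₂ hm₂)

theorem support_bsubst_monomial {g : Matrix (Fin n) (Fin n) k}
    (hg : ∀ i j : Fin n, j < i → g i j = 0) (s : Fin n →₀ ℕ) :
    ∀ m ∈ (bsubst g (monomial s (1 : k))).support, BDom s m := by
  induction s using Finsupp.induction with
  | zero =>
    intro m hm
    rw [monomial_zero', C_1, map_one] at hm
    have : m = 0 := by
      by_contra h
      have := mem_support_iff.mp hm
      rw [coeff_one, if_neg (by exact fun h' => h h'.symm)] at this
      exact this rfl
    rw [this]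
    exact BDom.refl 0
  | single_add a b f ha hb ih =>
    intro m hm
    have key : (monomial (Finsupp.single a b + f) (1 : k))
        = monomial f 1 * monomial (Finsupp.single a b) 1 := by
      rw [monomial_mul, one_mul, add_comm]
    rw [key, map_mul] at hm
    obtain ⟨m₁, hm₁, m₂, hm₂, rfl⟩ := Finset.mem_add.mp (support_mul _ _ hm)
    rw [add_comm (Finsupp.single a b) f]
    refine BDom.add (ih m₁ hm₁) ?_
    rw [← X_pow_eq_monomial, map_pow] at hm₂
    have : bsubst g (X a) = ∑ i : Fin n, g i a • X i := aeval_X _ a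
    rw [this] at hm₂
    exact support_Lpow hg a b m₂ hm₂

end BorelAux

section BorelField
variable {k : Type*} [Field k] {n : ℕ}

theorem aeval_scale_monomial (t : Fin n → k) (v : Fin n →₀ ℕ) (c : k) :
    aeval (fun j : Fin n => t j • X j) (monomial v c)
      = (eval t (monomial v (1 : k))) • monomial v c := by
  rw [aeval_monomial, eval_monomial, one_mul, monomial_eq (a := c)]
  simp only [Finsupp.prod, smul_pow, smul_eq_C_mul, mul_pow, Finset.prod_mul_distrib,
    algebraMap_eq, map_prod, map_pow]
  ring

theorem coeff_scale (t : Fin n → k) (p : MvPolynomial (Fin n) k) (m : Fin n →₀ ℕ) :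
    coeff m (aeval (fun j : Fin n => t j • X j) p)
      = eval t (monomial m (1 : k)) * coeff m p := by
  conv_lhs => rw [← support_sum_monomial_coeff p, map_sum]
  rw [coeff_sum]
  simp only [aeval_scale_monomial, coeff_smul, coeff_monomial, smul_eq_mul]
  rw [Finset.sum_eq_single m]
  · rw [if_pos rfl]
  · intro v _ hv
    rw [if_neg hv, mul_zero]
  · intro hm
    rw [if_pos rfl, notMem_support_iff.mp hm, mul_zero]

theorem bsubst_diagonal (t : Fin n → k) :
    bsubst (Matrix.diagonal t) = (aeval (fun j : Fin n => t j • X j) :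
      MvPolynomial (Fin n) k →ₐ[k] MvPolynomial (Fin n) k) := by
  apply MvPolynomial.algHom_ext
  intro j
  simp only [bsubst, aeval_X]
  rw [Finset.sum_eq_single j]
  · rw [Matrix.diagonal_apply_eq]
  · intro i _ hij
    rw [Matrix.diagonal_apply_ne _ hij, zero_smul]
  · simp

theorem exists_sep [CharZero k] (p : MvPolynomial (Fin n) k) (m₀ : Fin n →₀ ℕ) :
    ∃ t : Fin n → k, (∀ i, t i ≠ 0) ∧ ∀ m ∈ p.support, m ≠ m₀ →
      eval t (monomial m (1 : k)) ≠ eval t (monomial m₀ (1 : k)) := by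
  set F : MvPolynomial (Fin n) k :=
    (∏ i : Fin n, X i) * ∏ m ∈ p.support.erase m₀, (monomial m 1 - monomial m₀ 1) with hF
  have hFne : F ≠ 0 := by
    apply mul_ne_zero
    · exact Finset.prod_ne_zero_iff.mpr fun i _ => X_ne_zero i
    · refine Finset.prod_ne_zero_iff.mpr fun m hm => ?_
      intro h
      have := congrArg (coeff m) h
      rw [coeff_sub, coeff_monomial, coeff_monomial, if_pos rfl,
        if_neg (Finset.ne_of_mem_erase hm).symm, coeff_zero] at this
      norm_num at this
  obtain ⟨t, ht⟩ : ∃ t : Fin n → k, eval t F ≠ 0 := by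
    by_contra h
    push_neg at h
    exact hFne (MvPolynomial.funext fun x => by rw [h x, map_zero])
  rw [hF, map_mul, map_prod] at ht
  have h1 := left_ne_zero_of_mul ht
  have h2 := right_ne_zero_of_mul ht
  rw [map_prod] at h2
  refine ⟨t, ?_, ?_⟩
  · intro i
    have := Finset.prod_ne_zero_iff.mp h1 i (Finset.mem_univ i)
    simpa using this
  · intro m hm hne
    have := Finset.prod_ne_zero_iff.mp h2 m (Finset.mem_erase.mpr ⟨hne, hm⟩)
    rw [map_sub] at this
    exact sub_ne_zero.mp this

theorem torus_monomials [CharZero k] (I : Ideal (MvPolynomial (Fin n) k))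
    (H : ∀ g : Matrix (Fin n) (Fin n) k, IsUnit g → (∀ i j : Fin n, j < i → g i j = 0) →
      I.map (bsubst g) = I) :
    ∀ p ∈ I, ∀ m ∈ p.support, monomial m (1 : k) ∈ I := by
  suffices h : ∀ (N : ℕ) (p : MvPolynomial (Fin n) k), p ∈ I → p.support.card ≤ N →
      ∀ m ∈ p.support, monomial m (1 : k) ∈ I by
    exact fun p hp m hm => h p.support.card p hp le_rfl m hm
  intro N
  induction N with
  | zero =>
    intro p hp hcard m hm
    rw [Nat.le_zero, Finset.card_eq_zero] at hcard
    rw [hcard] at hm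
    exact absurd hm (Finset.notMem_empty m)
  | succ N ih =>
    intro p hp hcard m₀ hm₀
    obtain ⟨t, htne, htsep⟩ := exists_sep p m₀
    have hunit : IsUnit (Matrix.diagonal t) := by
      rw [Matrix.isUnit_iff_isUnit_det, Matrix.det_diagonal]
      exact (Finset.prod_ne_zero_iff.mpr fun i _ => htne i).isUnit
    have htri : ∀ i j : Fin n, j < i → Matrix.diagonal t i j = 0 := fun i j hij =>
      Matrix.diagonal_apply_ne t (ne_of_gt hij)
    have hmem : bsubst (Matrix.diagonal t) p ∈ I := by
      rw [← H (Matrix.diagonal t) hunit htri]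
      exact Ideal.mem_map_of_mem _ hp
    set T : (Fin n →₀ ℕ) → k := fun m => eval t (monomial m (1 : k)) with hT
    set q : MvPolynomial (Fin n) k := bsubst (Matrix.diagonal t) p - T m₀ • p with hq
    have hqI : q ∈ I := by
      rw [hq, smul_eq_C_mul]
      exact I.sub_mem hmem (I.mul_mem_left _ hp)
    have hqc : ∀ m, coeff m q = (T m - T m₀) * coeff m p := by
      intro m
      rw [hq, coeff_sub, coeff_smul, bsubst_diagonal, coeff_scale, smul_eq_mul, sub_mul]
    have hqsupp : q.support = p.support.erase m₀ := by
      ext m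
      rw [Finset.mem_erase, mem_support_iff, hqc, mem_support_iff]
      constructor
      · intro h
        have hp' : coeff m p ≠ 0 := right_ne_zero_of_mul h
        have hT' : T m ≠ T m₀ := fun he => h (by rw [he, sub_self, zero_mul])
        exact ⟨fun he => hT' (he ▸ rfl), hp'⟩
      · intro ⟨hne, hc⟩
        exact mul_ne_zero (sub_ne_zero.mpr (htsep m (mem_support_iff.mpr hc) hne)) hc
    have hall : ∀ m ∈ p.support.erase m₀, monomial m (1 : k) ∈ I := by
      intro m hm
      apply ih q hqI _ m (hqsupp ▸ hm)
      rw [hqsupp]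
      have := Finset.card_erase_lt_of_mem hm₀
      omega
    -- now p minus its other monomials is the m₀-monomial
    set r : MvPolynomial (Fin n) k :=
      p - ∑ m ∈ p.support.erase m₀, coeff m p • monomial m (1 : k) with hr
    have hrI : r ∈ I := by
      apply I.sub_mem hp
      refine Ideal.sum_mem I fun m hm => ?_
      rw [smul_eq_C_mul]
      exact I.mul_mem_left _ (hall m hm)
    have hre : r = coeff m₀ p • monomial m₀ (1 : k) := by
      rw [hr, sub_eq_iff_eq_add]
      conv_lhs => rw [← support_sum_monomial_coeff p]
      rw [← Finset.add_sum_erase _ _ hm₀]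
      simp only [smul_monomial, smul_eq_mul, mul_one]
    have hc₀ : coeff m₀ p ≠ 0 := mem_support_iff.mp hm₀
    have : monomial m₀ (1 : k) = (coeff m₀ p)⁻¹ • r := by
      rw [hre, smul_smul, inv_mul_cancel₀ hc₀, one_smul]
    rw [this, smul_eq_C_mul]
    exact I.mul_mem_left _ hrI

section Elementary
variable [CharZero k]

theorem bsubst_elementary {i j : Fin n} (hij : i ≠ j) :
    bsubst (1 + Matrix.single i j (1 : k))
      = (aeval (fun j' : Fin n => if j' = j then X j + X i else X j') :
          MvPolynomial (Fin n) k →ₐ[k] MvPolynomial (Fin n) k) := by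
  apply MvPolynomial.algHom_ext
  intro j'
  simp only [bsubst, aeval_X, Matrix.add_apply, add_smul, Finset.sum_add_distrib]
  have h1 : ∑ i' : Fin n, (1 : Matrix (Fin n) (Fin n) k) i' j' • (X i' : MvPolynomial (Fin n) k)
      = X j' := by
    rw [Finset.sum_eq_single j']
    · rw [Matrix.one_apply_eq, one_smul]
    · intro b _ hb
      rw [Matrix.one_apply_ne hb, zero_smul]
    · simp
  have h2 : ∑ i' : Fin n, (Matrix.single i j (1 : k)) i' j' • (X i' : MvPolynomial (Fin n) k)
      = if j' = j then X i else 0 := by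
    rw [Finset.sum_eq_single i]
    · by_cases h : j' = j
      · simp [Matrix.single, h]
      · have h' : ¬ j = j' := fun hh => h hh.symm
        simp [Matrix.single, h, h']
    · intro b _ hb
      simp [Matrix.single, Ne.symm hb]
    · simp
  rw [h1, h2]
  by_cases h : j' = j
  · simp [h]
  · simp [h]

theorem coeff_elem {i j : Fin n} (hij : i ≠ j) (m : Fin n →₀ ℕ) (hmj : 0 < m j) :
    coeff (m - Finsupp.single j 1 + Finsupp.single i 1)
      (aeval (fun j' : Fin n => if j' = j then X j + X i else X j')
        (monomial m (1 : k))) = (m j : k) := by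
  have hsplit : (monomial m (1 : k)) = monomial (m.erase j) 1 * X j ^ (m j) := by
    rw [X_pow_eq_monomial, monomial_mul, one_mul, Finsupp.erase_add_single]
  rw [hsplit, map_mul, map_pow, aeval_X, if_pos rfl]
  have hfix : aeval (fun j' : Fin n => if j' = j then X j + X i else X j')
      (monomial (m.erase j) (1 : k)) = (monomial (m.erase j) 1 : MvPolynomial (Fin n) k) := by
    rw [aeval_monomial, monomial_eq, C_1, map_one, one_mul, one_mul]
    refine Finset.prod_congr rfl fun j' hj' => ?_
    have : j' ≠ j := by
      rw [Finsupp.support_erase] at hj'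
      exact Finset.ne_of_mem_erase hj'
    simp [this]
  simp only [hfix]
  rw [add_pow]
  rw [Finset.mul_sum, coeff_sum]
  have hterm : ∀ c : ℕ, monomial (m.erase j) (1 : k) *
        ((X j : MvPolynomial (Fin n) k) ^ c * X i ^ (m j - c) * ((m j).choose c : MvPolynomial (Fin n) k))
      = monomial (m.erase j + Finsupp.single j c + Finsupp.single i (m j - c))
          (((m j).choose c : k)) := by
    intro c
    rw [X_pow_eq_monomial, X_pow_eq_monomial,
      ← map_natCast (C : k →+* MvPolynomial (Fin n) k) ((m j).choose c)]
    rw [C_apply]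
    simp only [monomial_mul, one_mul, mul_one, add_zero, add_assoc]
  have hm' : m - Finsupp.single j 1 + Finsupp.single i 1
      = m.erase j + Finsupp.single j (m j - 1) + Finsupp.single i (m j - (m j - 1)) := by
    have : m j - (m j - 1) = 1 := by omega
    rw [this]
    ext a
    by_cases haj : a = j
    · subst haj
      simp [Finsupp.single_apply, hij, Ne.symm hij]
    · by_cases hai : a = i
      · subst hai
        simp [Finsupp.single_apply, hij, Ne.symm haj, haj]
      · have h1 : ¬ i = a := fun h => hai h.symm
        have h2 : ¬ j = a := fun h => haj h.symm
        simp [Finsupp.single_apply, h1, h2, haj]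
  rw [Finset.sum_congr rfl fun c _ => congrArg (coeff _) (hterm c)]
  rw [Finset.sum_eq_single (m j - 1)]
  · rw [hm', coeff_monomial, if_pos rfl]
    congr 1
    rw [Nat.choose_symm (by omega : 1 ≤ m j), Nat.choose_one_right]
  · intro c hc hcne
    rw [coeff_monomial, if_neg]
    intro he
    apply hcne
    have := congrArg (fun f : Fin n →₀ ℕ => f j) (he.trans hm')
    simpa [Finsupp.single_apply, hij, Ne.symm hij, Finsupp.erase_same] using this
  · intro h
    exact absurd (Finset.mem_range.mpr (by omega)) h

end Elementary
end BorelField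

set_option maxHeartbeats 1000000 in
/-- (char k = 0) A homogeneous ideal `I` in `k[x₁,…,xₙ]` is Borel-fixed
(invariant under the action of every invertible upper triangular matrix `g`,
acting as the `k`-algebra endomorphism `x_j ↦ Σ_i g_{ij} x_i`) if and only if
`I` is a monomial ideal which is strongly stable. -/
theorem borelFixed_iff_stronglyStable
    {k : Type*} [Field k] [CharZero k] {n : ℕ}
    (I : Ideal (MvPolynomial (Fin n) k))
    (hhom : ∀ p ∈ I, ∀ d : ℕ, homogeneousComponent d p ∈ I) :
    (∀ g : Matrix (Fin n) (Fin n) k, IsUnit g → (∀ i j : Fin n, j < i → g i j = 0) →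
        I.map (aeval fun j : Fin n => ∑ i : Fin n, g i j • X i :
          MvPolynomial (Fin n) k →ₐ[k] MvPolynomial (Fin n) k) = I)
      ↔ ((∃ S : Set (Fin n →₀ ℕ),
            I = Ideal.span ((fun s => monomial s (1 : k)) '' S)) ∧
          (∀ (m : Fin n →₀ ℕ) (i j : Fin n), i < j → monomial m (1 : k) ∈ I →
            0 < m j →
            monomial (m - Finsupp.single j 1 + Finsupp.single i 1) (1 : k) ∈ I)) := by
  constructor
  · intro H
    have H' : ∀ g : Matrix (Fin n) (Fin n) k, IsUnit g →
        (∀ i j : Fin n, j < i → g i j = 0) → I.map (bsubst g) = I := H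
    have K := torus_monomials I H'
    constructor
    · refine ⟨{m | monomial m (1 : k) ∈ I}, le_antisymm ?_ ?_⟩
      · intro p hp
        rw [← support_sum_monomial_coeff p]
        refine Ideal.sum_mem _ fun m hm => ?_
        have h1 : monomial m (1 : k) ∈ I := K p hp m hm
        have h2 : monomial m (coeff m p) = C (coeff m p) * monomial m (1 : k) := by
          rw [C_mul_monomial, mul_one]
        rw [h2]
        exact Ideal.mul_mem_left _ _ (Ideal.subset_span ⟨m, h1, rfl⟩)
      · rw [Ideal.span_le]
        rintro _ ⟨m, hm, rfl⟩
        exact hm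
    · intro m i j hij hm hmj
      have hne : i ≠ j := ne_of_lt hij
      set g : Matrix (Fin n) (Fin n) k := 1 + Matrix.single i j (1 : k) with hg
      have htri : ∀ i' j' : Fin n, j' < i' → g i' j' = 0 := by
        intro i' j' hlt
        rw [hg, Matrix.add_apply, Matrix.one_apply_ne (ne_of_gt hlt)]
        have : ¬ (i = i' ∧ j = j') := by
          rintro ⟨rfl, rfl⟩
          exact absurd hij (not_lt.mpr hlt.le)
        simp [Matrix.single, this]
      have hbt : g.BlockTriangular id := fun i' j' h => htri i' j' h
      have hunit : IsUnit g := by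
        rw [Matrix.isUnit_iff_isUnit_det, Matrix.det_of_upperTriangular hbt]
        have : ∀ a : Fin n, g a a = 1 := by
          intro a
          rw [hg, Matrix.add_apply, Matrix.one_apply_eq]
          have : ¬ (i = a ∧ j = a) := by
            rintro ⟨rfl, rfl⟩
            exact hne rfl
          simp [Matrix.single, this]
        rw [Finset.prod_congr rfl fun a _ => this a]
        simp
      have hP : bsubst g (monomial m (1 : k)) ∈ I := by
        rw [← H' g hunit htri]
        exact Ideal.mem_map_of_mem _ hm
      rw [bsubst_elementary hne] at hP
      refine K _ hP _ (mem_support_iff.mpr ?_)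
      rw [coeff_elem hne m hmj]
      exact Nat.cast_ne_zero.mpr (by omega)
  · rintro ⟨⟨S, hS⟩, SS⟩ g hgu hgt
    show I.map (bsubst g) = I
    have good : ∀ s m : Fin n →₀ ℕ, BDom s m → monomial s (1 : k) ∈ I →
        monomial m (1 : k) ∈ I := fun s m hd hs =>
      BDom.good (Good := fun m => monomial m (1 : k) ∈ I)
        (fun m i j hij hm hmj => SS m i j hij hm hmj)
        ((∑ i : Fin n, (i : ℕ) * s i) + 1) s m (Nat.lt_succ_self _) hd hs
    have hsub : ∀ g' : Matrix (Fin n) (Fin n) k, (∀ i j : Fin n, j < i → g' i j = 0) →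
        I.map (bsubst g') ≤ I := by
      intro g' ht
      conv_lhs => rw [hS]
      rw [Ideal.map_span, Ideal.span_le]
      rintro _ ⟨_, ⟨s, hsS, rfl⟩, rfl⟩
      have hgood_s : monomial s (1 : k) ∈ I := hS ▸ Ideal.subset_span ⟨s, hsS, rfl⟩
      rw [← support_sum_monomial_coeff (bsubst g' (monomial s (1 : k)))]
      refine Ideal.sum_mem _ fun m hm => ?_
      have h1 : monomial m (1 : k) ∈ I :=
        good s m (support_bsubst_monomial ht s m hm) hgood_s
      have h2 : monomial m (coeff m (bsubst g' (monomial s (1 : k))))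
          = C (coeff m (bsubst g' (monomial s (1 : k)))) * monomial m (1 : k) := by
        rw [C_mul_monomial, mul_one]
      rw [h2]
      exact Ideal.mul_mem_left _ _ h1
    have hdet : IsUnit g.det := (Matrix.isUnit_iff_isUnit_det g).mp hgu
    haveI : Invertible g := g.invertibleOfIsUnitDet hdet
    have hinvt : ∀ i' j' : Fin n, j' < i' → g⁻¹ i' j' = 0 := by
      have hbt : g.BlockTriangular id := fun i' j' h => hgt i' j' h
      have := Matrix.blockTriangular_inv_of_blockTriangular hbt
      exact fun i' j' h => this h
    refine le_antisymm (hsub g hgt) ?_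
    have hmul : g * g⁻¹ = 1 := Matrix.mul_nonsing_inv g hdet
    intro p hp
    have h1 : bsubst g⁻¹ p ∈ I := hsub g⁻¹ hinvt (Ideal.mem_map_of_mem _ hp)
    have h2 : bsubst g (bsubst g⁻¹ p) = p := by
      have h3 := DFunLike.congr_fun (bsubst_comp g g⁻¹) p
      rw [hmul, bsubst_one] at h3
      simpa using h3
    have h4 := Ideal.mem_map_of_mem (bsubst g) h1
    rwa [h2] at h4
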